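/- Let n ≥ 3 be an integer, k > 0, R > 0, and let X : [0,∞) → (0,∞) be twice continuously differentiable with X″(t) = k / X(t)^{n-1} for all t ≥ 0, X(0) = R and X′(0) = 0. Then X′(t) > 0 for every t > 0, X(t) → ∞ as t → ∞, and X′(t) → √(2k / ((n-2) R^{n-2})) as t → ∞. -/

import Mathlib

/-- Repulsive characteristics with vanishing initial velocity: `X′(t) > 0` for `t > 0`,
`X(t) → ∞`, and `X′(t) → √(2k/((n-2)R^{n-2}))` as `t → ∞`. -/
theorem repulsive_zero_velocity (n : ℕ) (hn : 3 ≤ n) (k R : ℝ)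
    (hk : 0 < k) (hR : 0 < R) (X : ℝ → ℝ)
    (hpos : ∀ t : ℝ, 0 ≤ t → 0 < X t)
    (hC2 : ContDiffOn ℝ 2 X (Set.Ici 0))
    (hode : ∀ t : ℝ, 0 ≤ t →
      derivWithin (derivWithin X (Set.Ici 0)) (Set.Ici 0) t = k / X t ^ (n - 1))
    (hX0 : X 0 = R)
    (hX'0 : derivWithin X (Set.Ici 0) 0 = 0) :
    (∀ t : ℝ, 0 < t → 0 < derivWithin X (Set.Ici 0) t) ∧
    Filter.Tendsto X Filter.atTop Filter.atTop ∧
    Filter.Tendsto (derivWithin X (Set.Ici 0)) Filter.atTop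
      (nhds (Real.sqrt (2 * k / (((n : ℝ) - 2) * R ^ (n - 2))))) := by
  obtain ⟨m, rfl⟩ : ∃ m, n = m + 3 := ⟨n - 3, by omega⟩
  set V : ℝ → ℝ := derivWithin X (Set.Ici 0) with hV
  have hU : UniqueDiffOn ℝ (Set.Ici (0:ℝ)) := uniqueDiffOn_Ici 0
  have hXd : DifferentiableOn ℝ X (Set.Ici 0) := hC2.differentiableOn (by norm_num)
  have hVcd : ContDiffOn ℝ 1 V (Set.Ici 0) := hC2.derivWithin hU (by norm_num)
  have hVd : DifferentiableOn ℝ V (Set.Ici 0) := hVcd.differentiableOn one_ne_zero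
  have hVcont : ContinuousOn V (Set.Ici 0) := hVd.continuousOn
  have hXc : ContinuousOn X (Set.Ici 0) := hXd.continuousOn
  have hm1 : m + 3 - 1 = m + 2 := by omega
  have hm2 : m + 3 - 2 = m + 1 := by omega
  rw [hm2]
  have hodem : ∀ t : ℝ, 0 ≤ t →
      derivWithin V (Set.Ici 0) t = k / X t ^ (m + 2) := by
    intro t ht; rw [hV, hode t ht, hm1]
  have hXt : ∀ t : ℝ, t ∈ Set.Ici (0:ℝ) → HasDerivWithinAt X (V t) (Set.Ici 0) t :=
    fun t ht => (hXd t ht).hasDerivWithinAt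
  have hVt : ∀ t : ℝ, t ∈ Set.Ici (0:ℝ) →
      HasDerivWithinAt V (k / X t ^ (m + 2)) (Set.Ici 0) t := by
    intro t ht
    have := (hVd t ht).hasDerivWithinAt
    rwa [hodem t ht] at this
  -- V is strictly increasing on [0, ∞)
  have hVmono : StrictMonoOn V (Set.Ici 0) := by
    apply strictMonoOn_of_hasDerivWithinAt_pos (convex_Ici 0) hVcont
      (f' := fun t => k / X t ^ (m + 2))
    · intro x hx
      rw [interior_Ici] at hx ⊢
      exact (hVt x (Set.mem_Ici.2 (Set.mem_Ioi.1 hx).le)).mono Set.Ioi_subset_Ici_self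
    · intro x hx
      rw [interior_Ici] at hx
      exact div_pos hk (pow_pos (hpos x (le_of_lt hx)) _)
  have hVpos : ∀ t : ℝ, 0 < t → 0 < V t := by
    intro t ht
    have := hVmono (Set.self_mem_Ici) (Set.mem_Ici.2 ht.le) ht
    rwa [hX'0] at this
  have hVnn : ∀ t : ℝ, 0 ≤ t → 0 ≤ V t := by
    intro t ht
    rcases eq_or_lt_of_le ht with h | h
    · rw [← h, hX'0]
    · exact (hVpos t h).le
  -- X tends to infinity
  have hV1 : 0 < V 1 := hVpos 1 one_pos
  have hderiv_eq : ∀ x : ℝ, 0 < x → deriv X x = V x := by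
    intro x hx
    exact (derivWithin_of_mem_nhds (Ici_mem_nhds hx)).symm
  have hlin : ∀ t : ℝ, 1 ≤ t → V 1 * (t - 1) ≤ X t - X 1 := by
    intro t ht
    refine (convex_Ici 1).mul_sub_le_image_sub_of_le_deriv
      (hXc.mono (Set.Ici_subset_Ici.2 zero_le_one)) ?_ ?_ 1 Set.self_mem_Ici t ht ht
    · rw [interior_Ici]
      intro x hx
      have hx0 : (0:ℝ) < x := lt_trans one_pos hx
      exact ((hXd x hx0.le).differentiableAt (Ici_mem_nhds hx0)).differentiableWithinAt
    · rw [interior_Ici]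
      intro x hx
      have hx0 : (0:ℝ) < x := lt_trans one_pos hx
      rw [hderiv_eq x hx0]
      exact (hVmono.monotoneOn) (Set.mem_Ici.2 zero_le_one) (Set.mem_Ici.2 hx0.le)
        (le_of_lt hx)
  have hXtop : Filter.Tendsto X Filter.atTop Filter.atTop := by
    apply Filter.tendsto_atTop_mono' Filter.atTop
      (f₁ := fun t => X 1 + V 1 * (t - 1))
    · filter_upwards [Filter.eventually_ge_atTop (1:ℝ)] with t ht
      linarith [hlin t ht]
    · apply Filter.tendsto_atTop_add_const_left
      exact (Filter.tendsto_atTop_add_const_right _ _ Filter.tendsto_id).const_mul_atTop hV1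
  refine ⟨hVpos, hXtop, ?_⟩
  -- Energy conservation
  set C : ℝ := 2 * k / (((m:ℝ) + 1) * R ^ (m + 1)) with hC
  set E : ℝ → ℝ := fun t => V t ^ 2 + (2 * k / ((m:ℝ) + 1)) * (X t ^ (m + 1))⁻¹ with hE
  have hm1pos : (0:ℝ) < (m:ℝ) + 1 := by positivity
  have hEderiv : ∀ t ∈ Set.Ici (0:ℝ), HasDerivWithinAt E 0 (Set.Ici 0) t := by
    intro t ht
    have hXne : X t ≠ 0 := (hpos t ht).ne'
    have h1 := (hVt t ht).pow 2
    have h2 := (hXt t ht).pow (m + 1)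
    have h3 := (h2.inv (pow_ne_zero _ hXne)).const_mul (2 * k / ((m:ℝ) + 1))
    have h4 := h1.add h3
    convert h4 using 1 <;> try rfl
    have hm : m + 1 - 1 = m := by omega
    rw [hm]
    simp only [Pi.pow_apply]
    field_simp
    push_cast
    ring
  have hEconst : ∀ t : ℝ, 0 ≤ t → E t = E 0 := by
    intro t ht
    have := (convex_Ici (0:ℝ)).norm_image_sub_le_of_norm_hasDerivWithin_le
      (f' := fun _ => (0:ℝ)) (C := 0) hEderiv (fun x _ => by simp) Set.self_mem_Ici
      (Set.mem_Ici.2 ht)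
    simp only [zero_mul, norm_le_zero_iff, sub_eq_zero] at this
    exact this
  have hE0 : E 0 = C := by
    simp only [hE, hX'0, hX0, hC]
    field_simp
    norm_num
  have hVsq : ∀ t : ℝ, 0 ≤ t →
      V t ^ 2 = C - (2 * k / ((m:ℝ) + 1)) * (X t ^ (m + 1))⁻¹ := by
    intro t ht
    have := hEconst t ht
    rw [hE0] at this
    simp only [hE] at this
    linarith
  -- limit of V
  have hXpowtop : Filter.Tendsto (fun t => X t ^ (m + 1)) Filter.atTop Filter.atTop :=
    (Filter.tendsto_pow_atTop (Nat.succ_ne_zero m)).comp hXtop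
  have hinv : Filter.Tendsto (fun t => (X t ^ (m + 1))⁻¹) Filter.atTop (nhds 0) :=
    hXpowtop.inv_tendsto_atTop
  have hVsqlim : Filter.Tendsto (fun t => V t ^ 2) Filter.atTop (nhds C) := by
    have h := Filter.Tendsto.sub (tendsto_const_nhds (x := C))
      (hinv.const_mul (2 * k / ((m:ℝ) + 1)))
    rw [mul_zero, sub_zero] at h
    apply h.congr'
    filter_upwards [Filter.eventually_ge_atTop (0:ℝ)] with t ht
    exact (hVsq t ht).symm
  have hsqrt : Filter.Tendsto (fun t => Real.sqrt (V t ^ 2)) Filter.atTop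
      (nhds (Real.sqrt C)) :=
    (Real.continuous_sqrt.continuousAt.tendsto).comp hVsqlim
  rw [show (((m + 3 : ℕ):ℝ) - 2) = (m:ℝ) + 1 by push_cast; ring]
  apply hsqrt.congr'
  filter_upwards [Filter.eventually_ge_atTop (0:ℝ)] with t ht
  exact Real.sqrt_sq (hVnn t ht)
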